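/- arXiv:2208.14424 — 3 statements merged into one kernel-verified Lean document; each statement's English description precedes it below -/
import Mathlib

section
/- Let 𝐇 be an entropy. Then 𝐇(ρ) ≥ 0 for every state ρ of every finite dimension. -/
open Matrix Kronecker BigOperators
open scoped ENNReal ComplexOrder

noncomputable section

/-- A quantum state: a positive semidefinite matrix of trace one. -/
def IsState {α : Type} [Fintype α] (ρ : Matrix α α ℂ) : Prop :=
  ρ.PosSemidef ∧ ρ.trace = 1

/-- The Choi matrix `∑ i j, E i j ⊗ N (E i j)` of a map between matrix algebras. -/
def choiMatrix {α β : Type} [Fintype α] [DecidableEq α] [Fintype β]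
    (N : Matrix α α ℂ → Matrix β β ℂ) : Matrix (α × β) (α × β) ℂ :=
  ∑ i : α, ∑ j : α, Matrix.single i j (1 : ℂ) ⊗ₖ N (Matrix.single i j 1)

/-- A quantum channel: a linear, trace-preserving and completely positive map. -/
def IsChannel {α β : Type} [Fintype α] [DecidableEq α] [Fintype β]
    (N : Matrix α α ℂ → Matrix β β ℂ) : Prop :=
  IsLinearMap ℂ N ∧ (∀ X, (N X).trace = X.trace) ∧ (choiMatrix N).PosSemidef

/-- Partial trace over the first tensor factor. -/
def trA {α β : Type} [Fintype α] (ρ : Matrix (α × β) (α × β) ℂ) : Matrix β β ℂ :=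
  Matrix.of fun j j' => ∑ i : α, ρ (i, j) (i, j')

/-- The uniform (maximally mixed) state of dimension `n`. -/
def unif (n : ℕ) : Matrix (Fin n) (Fin n) ℂ := (n : ℂ)⁻¹ • 1

/-- The tensor extension `M ⊗ id` of a map `M` acting on the first factor. -/
def tensorIdRight {a a' : ℕ} (b : ℕ)
    (M : Matrix (Fin a) (Fin a) ℂ → Matrix (Fin a') (Fin a') ℂ)
    (X : Matrix (Fin a × Fin b) (Fin a × Fin b) ℂ) :
    Matrix (Fin a' × Fin b) (Fin a' × Fin b) ℂ :=
  Matrix.of fun p q => M (Matrix.of fun k k' => X (k, p.2) (k', q.2)) p.1 q.1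

/-- A conditionally unital bipartite channel: it sends every state of the form
`u_A ⊗ ρ_B` to a state of the form `u_C ⊗ σ_{B'}`. -/
def CondUnital {a b c b' : ℕ}
    (N : Matrix (Fin a × Fin b) (Fin a × Fin b) ℂ → Matrix (Fin c × Fin b') (Fin c × Fin b') ℂ) :
    Prop :=
  ∀ ρB : Matrix (Fin b) (Fin b) ℂ, IsState ρB →
    ∃ σ : Matrix (Fin b') (Fin b') ℂ, IsState σ ∧ N (unif a ⊗ₖ ρB) = unif c ⊗ₖ σ

/-- An `A ↛ B'` semi-causal bipartite channel. -/
def SemiCausal {a b c b' : ℕ}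
    (N : Matrix (Fin a × Fin b) (Fin a × Fin b) ℂ → Matrix (Fin c × Fin b') (Fin c × Fin b') ℂ) :
    Prop :=
  ∀ M : Matrix (Fin a) (Fin a) ℂ → Matrix (Fin a) (Fin a) ℂ, IsChannel M →
    ∀ X : Matrix (Fin a × Fin b) (Fin a × Fin b) ℂ,
      trA (N (tensorIdRight b M X)) = trA (N X)

/-- A locally balanced channel: a quantum channel that is both conditionally unital
and `A ↛ B'` semi-causal. -/
def LocallyBalanced {a b c b' : ℕ}
    (N : Matrix (Fin a × Fin b) (Fin a × Fin b) ℂ → Matrix (Fin c × Fin b') (Fin c × Fin b') ℂ) :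
    Prop :=
  IsChannel N ∧ CondUnital N ∧ SemiCausal N

/-- Conditional majorization `ρ ≻_A σ` with respect to the first system. -/
def CondMaj {a b a' b' : ℕ}
    (ρ : Matrix (Fin a × Fin b) (Fin a × Fin b) ℂ)
    (σ : Matrix (Fin a' × Fin b') (Fin a' × Fin b') ℂ) : Prop :=
  (a' ≥ a ∧ ∃ (V : Matrix (Fin a') (Fin a) ℂ)
      (N : Matrix (Fin a × Fin b) (Fin a × Fin b) ℂ →
           Matrix (Fin a × Fin b') (Fin a × Fin b') ℂ),
      Vᴴ * V = 1 ∧ LocallyBalanced N ∧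
      σ = (V ⊗ₖ (1 : Matrix (Fin b') (Fin b') ℂ)) * N ρ *
            (V ⊗ₖ (1 : Matrix (Fin b') (Fin b') ℂ))ᴴ) ∨
  (a ≥ a' ∧ ∃ (U : Matrix (Fin a) (Fin a') ℂ)
      (N : Matrix (Fin a × Fin b) (Fin a × Fin b) ℂ →
           Matrix (Fin a × Fin b') (Fin a × Fin b') ℂ),
      Uᴴ * U = 1 ∧ LocallyBalanced N ∧
      (U ⊗ₖ (1 : Matrix (Fin b') (Fin b') ℂ)) * σ *
          (U ⊗ₖ (1 : Matrix (Fin b') (Fin b') ℂ))ᴴ = N ρ)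

/-- Relaxed conditional majorization `ρ ≻^A σ`: as `CondMaj`, with the locally
balanced channel replaced by a mere conditionally unital channel. -/
def RelCondMaj {a b a' b' : ℕ}
    (ρ : Matrix (Fin a × Fin b) (Fin a × Fin b) ℂ)
    (σ : Matrix (Fin a' × Fin b') (Fin a' × Fin b') ℂ) : Prop :=
  (a' ≥ a ∧ ∃ (V : Matrix (Fin a') (Fin a) ℂ)
      (N : Matrix (Fin a × Fin b) (Fin a × Fin b) ℂ →
           Matrix (Fin a × Fin b') (Fin a × Fin b') ℂ),
      Vᴴ * V = 1 ∧ (IsChannel N ∧ CondUnital N) ∧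
      σ = (V ⊗ₖ (1 : Matrix (Fin b') (Fin b') ℂ)) * N ρ *
            (V ⊗ₖ (1 : Matrix (Fin b') (Fin b') ℂ))ᴴ) ∨
  (a ≥ a' ∧ ∃ (U : Matrix (Fin a) (Fin a') ℂ)
      (N : Matrix (Fin a × Fin b) (Fin a × Fin b) ℂ →
           Matrix (Fin a × Fin b') (Fin a × Fin b') ℂ),
      Uᴴ * U = 1 ∧ (IsChannel N ∧ CondUnital N) ∧
      (U ⊗ₖ (1 : Matrix (Fin b') (Fin b') ℂ)) * σ *
          (U ⊗ₖ (1 : Matrix (Fin b') (Fin b') ℂ))ᴴ = N ρ)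

/-- Reordering `(A × B) × (A' × B') ≃ AA' × BB'`. -/
def sysEquiv (a b a' b' : ℕ) :
    (Fin a × Fin b) × (Fin a' × Fin b') ≃ Fin (a * a') × Fin (b * b') :=
  (Equiv.prodProdProdComm (Fin a) (Fin b) (Fin a') (Fin b')).trans
    (finProdFinEquiv.prodCongr finProdFinEquiv)

/-- The tensor product `ρ_{AB} ⊗ σ_{A'B'}` regarded as a bipartite state with
first system `AA'` and second system `BB'`. -/
def tensorState {a b a' b' : ℕ}
    (ρ : Matrix (Fin a × Fin b) (Fin a × Fin b) ℂ)
    (σ : Matrix (Fin a' × Fin b') (Fin a' × Fin b') ℂ) :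
    Matrix (Fin (a * a') × Fin (b * b')) (Fin (a * a') × Fin (b * b')) ℂ :=
  Matrix.reindex (sysEquiv a b a' b') (sysEquiv a b a' b') (ρ ⊗ₖ σ)

/-- Reindexing of a matrix on a product of `Fin` types as a matrix on a single `Fin` type. -/
def mreindex {a b : ℕ} (ρ : Matrix (Fin a × Fin b) (Fin a × Fin b) ℂ) :
    Matrix (Fin (a * b)) (Fin (a * b)) ℂ :=
  Matrix.reindex finProdFinEquiv finProdFinEquiv ρ

/-- Majorization `ρ ≻ σ` between states of possibly different dimensions. -/
def Maj {n n' : ℕ} (ρ : Matrix (Fin n) (Fin n) ℂ) (σ : Matrix (Fin n') (Fin n') ℂ) : Prop :=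
  (n' ≥ n ∧ ∃ (V : Matrix (Fin n') (Fin n) ℂ)
      (N : Matrix (Fin n) (Fin n) ℂ → Matrix (Fin n) (Fin n) ℂ),
      Vᴴ * V = 1 ∧ IsChannel N ∧ N 1 = 1 ∧ σ = V * N ρ * Vᴴ) ∨
  (n ≥ n' ∧ ∃ (U : Matrix (Fin n) (Fin n') ℂ)
      (N : Matrix (Fin n) (Fin n) ℂ → Matrix (Fin n) (Fin n) ℂ),
      Uᴴ * U = 1 ∧ IsChannel N ∧ N 1 = 1 ∧ U * σ * Uᴴ = N ρ)

/-- The conditional min-entropy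
`H_min(A|B)_ρ = - log₂ min {λ ≥ 0 : λ I_A ⊗ ρ_B - ρ_{AB} ≽ 0}`. -/
def condMinEntropy {a b : ℕ} (ρ : Matrix (Fin a × Fin b) (Fin a × Fin b) ℂ) : ℝ :=
  - Real.logb 2 (sInf {l : ℝ | 0 ≤ l ∧
      (l • ((1 : Matrix (Fin a) (Fin a) ℂ) ⊗ₖ trA ρ) - ρ).PosSemidef})

/-- The conditional min-entropy `H_min^↑(A|B)_ρ`, optimized over states `σ_B`. -/
def condMinEntropyUp {a b : ℕ} (ρ : Matrix (Fin a × Fin b) (Fin a × Fin b) ℂ) : ℝ :=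
  sSup {r : ℝ | ∃ σ : Matrix (Fin b) (Fin b) ℂ, IsState σ ∧
    (∃ l : ℝ, 0 ≤ l ∧ (l • ((1 : Matrix (Fin a) (Fin a) ℂ) ⊗ₖ σ) - ρ).PosSemidef) ∧
    r = - Real.logb 2 (sInf {l : ℝ | 0 ≤ l ∧
      (l • ((1 : Matrix (Fin a) (Fin a) ℂ) ⊗ₖ σ) - ρ).PosSemidef})}

/-- The maximally entangled state of rank `k` on `ℂ^k ⊗ ℂ^k`. -/
def maxEnt (k : ℕ) : Matrix (Fin k × Fin k) (Fin k × Fin k) ℂ :=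
  Matrix.of fun p q => if p.1 = p.2 ∧ q.1 = q.2 then (k : ℂ)⁻¹ else 0

/-- The quantum channel on `m × m` matrices induced by a doubly stochastic matrix `D`,
`ρ ↦ ∑ x x', D x' x * ρ x x • E x' x'`. -/
def dsChannel {m : ℕ} (D : Matrix (Fin m) (Fin m) ℝ) :
    Matrix (Fin m) (Fin m) ℂ → Matrix (Fin m) (Fin m) ℂ :=
  fun ρ => ∑ x : Fin m, ∑ x' : Fin m,
    (((D x' x : ℝ) : ℂ) * ρ x x) • Matrix.single x' x' (1 : ℂ)

/-- A doubly stochastic matrix: nonnegative entries, all row and column sums equal one. -/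
def IsDoublyStochastic {m : ℕ} (D : Matrix (Fin m) (Fin m) ℝ) : Prop :=
  (∀ x x', 0 ≤ D x x') ∧ (∀ x, ∑ x', D x x' = 1) ∧ (∀ x', ∑ x, D x x' = 1)

/-- The tensor product `M ⊗ F` of two (linear) maps between matrix algebras. -/
def tensorMap {m m' n n' : ℕ}
    (M : Matrix (Fin m) (Fin m) ℂ → Matrix (Fin m') (Fin m') ℂ)
    (F : Matrix (Fin n) (Fin n) ℂ → Matrix (Fin n') (Fin n') ℂ) :
    Matrix (Fin m × Fin n) (Fin m × Fin n) ℂ →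
      Matrix (Fin m' × Fin n') (Fin m' × Fin n') ℂ :=
  fun X => ∑ k : Fin m, ∑ k' : Fin m, ∑ l : Fin n, ∑ l' : Fin n,
    X (k, l) (k', l') •
      (M (Matrix.single k k' 1) ⊗ₖ F (Matrix.single l l' 1))

/-- A conditional entropy: a real-valued function on all bipartite states of all finite
dimensions that is not identically zero, reverses conditional majorization, and is
additive on tensor products. -/
structure CondEntropy where
  H : ∀ (a b : ℕ), Matrix (Fin a × Fin b) (Fin a × Fin b) ℂ → ℝ
  nontrivial : ∃ (a b : ℕ) (ρ : Matrix (Fin a × Fin b) (Fin a × Fin b) ℂ),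
    IsState ρ ∧ H a b ρ ≠ 0
  mono : ∀ (a b a' b' : ℕ) (ρ : Matrix (Fin a × Fin b) (Fin a × Fin b) ℂ)
    (σ : Matrix (Fin a' × Fin b') (Fin a' × Fin b') ℂ),
    IsState ρ → IsState σ → CondMaj ρ σ → H a b ρ ≤ H a' b' σ
  additive : ∀ (a b a' b' : ℕ) (ρ : Matrix (Fin a × Fin b) (Fin a × Fin b) ℂ)
    (σ : Matrix (Fin a' × Fin b') (Fin a' × Fin b') ℂ),
    IsState ρ → IsState σ →
    H (a * a') (b * b') (tensorState ρ σ) = H a b ρ + H a' b' σ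

/-- A conditional entropy is normalized if `H(A|B) = 1` on `u⁽²⁾ ⊗ ρ_B`. -/
def CondEntropy.Normalized (E : CondEntropy) : Prop :=
  ∀ (b : ℕ) (ρB : Matrix (Fin b) (Fin b) ℂ), IsState ρB →
    E.H 2 b (unif 2 ⊗ₖ ρB) = 1

/-- A relaxed conditional entropy: as `CondEntropy`, but monotone under the relaxed
conditional majorization. -/
structure RelCondEntropy where
  H : ∀ (a b : ℕ), Matrix (Fin a × Fin b) (Fin a × Fin b) ℂ → ℝ
  nontrivial : ∃ (a b : ℕ) (ρ : Matrix (Fin a × Fin b) (Fin a × Fin b) ℂ),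
    IsState ρ ∧ H a b ρ ≠ 0
  mono : ∀ (a b a' b' : ℕ) (ρ : Matrix (Fin a × Fin b) (Fin a × Fin b) ℂ)
    (σ : Matrix (Fin a' × Fin b') (Fin a' × Fin b') ℂ),
    IsState ρ → IsState σ → RelCondMaj ρ σ → H a b ρ ≤ H a' b' σ
  additive : ∀ (a b a' b' : ℕ) (ρ : Matrix (Fin a × Fin b) (Fin a × Fin b) ℂ)
    (σ : Matrix (Fin a' × Fin b') (Fin a' × Fin b') ℂ),
    IsState ρ → IsState σ →
    H (a * a') (b * b') (tensorState ρ σ) = H a b ρ + H a' b' σ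

/-- A relaxed conditional entropy is normalized if `H(A|B) = 1` on `u⁽²⁾ ⊗ ρ_B`. -/
def RelCondEntropy.Normalized (E : RelCondEntropy) : Prop :=
  ∀ (b : ℕ) (ρB : Matrix (Fin b) (Fin b) ℂ), IsState ρB →
    E.H 2 b (unif 2 ⊗ₖ ρB) = 1

/-- An entropy: a real-valued function on all states of all finite dimensions that is
not identically zero, reverses majorization, and is additive on tensor products. -/
structure Entropy where
  H : ∀ (n : ℕ), Matrix (Fin n) (Fin n) ℂ → ℝ
  nontrivial : ∃ (n : ℕ) (ρ : Matrix (Fin n) (Fin n) ℂ), IsState ρ ∧ H n ρ ≠ 0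
  mono : ∀ (n n' : ℕ) (ρ : Matrix (Fin n) (Fin n) ℂ) (σ : Matrix (Fin n') (Fin n') ℂ),
    IsState ρ → IsState σ → Maj ρ σ → H n ρ ≤ H n' σ
  additive : ∀ (n n' : ℕ) (ρ : Matrix (Fin n) (Fin n) ℂ) (σ : Matrix (Fin n') (Fin n') ℂ),
    IsState ρ → IsState σ → H (n * n') (mreindex (ρ ⊗ₖ σ)) = H n ρ + H n' σ

/-- A relative entropy: an `[0,∞]`-valued function on pairs of states of equal dimension
that is not identically zero, monotone under quantum channels, and additive on
tensor products. -/
structure RelEntropy where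
  D : ∀ (n : ℕ), Matrix (Fin n) (Fin n) ℂ → Matrix (Fin n) (Fin n) ℂ → ℝ≥0∞
  nontrivial : ∃ (n : ℕ) (ρ σ : Matrix (Fin n) (Fin n) ℂ),
    IsState ρ ∧ IsState σ ∧ D n ρ σ ≠ 0
  mono : ∀ (n m : ℕ) (N : Matrix (Fin n) (Fin n) ℂ → Matrix (Fin m) (Fin m) ℂ),
    IsChannel N → ∀ ρ σ : Matrix (Fin n) (Fin n) ℂ,
      IsState ρ → IsState σ → D m (N ρ) (N σ) ≤ D n ρ σ
  additive : ∀ (n m : ℕ) (ρ σ : Matrix (Fin n) (Fin n) ℂ) (ω τ : Matrix (Fin m) (Fin m) ℂ),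
    IsState ρ → IsState σ → IsState ω → IsState τ →
    D (n * m) (mreindex (ρ ⊗ₖ ω)) (mreindex (σ ⊗ₖ τ)) = D n ρ σ + D m ω τ


/-- The conditional entropy `log₂|A| − 𝐃(ρ_{AB} ‖ u_A ⊗ ρ_B)` induced by a relative
entropy `𝐃`, valued in the extended reals. -/
def RelEntropy.condH (Dd : RelEntropy) (a b : ℕ)
    (ρ : Matrix (Fin a × Fin b) (Fin a × Fin b) ℂ) : EReal :=
  ((Real.logb 2 a : ℝ) : EReal) -
    ((Dd.D (a * b) (mreindex ρ) (mreindex (unif a ⊗ₖ trA ρ)) : ℝ≥0∞) : EReal)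



lemma EN.kron_conjTranspose {m p q r : Type*} [Fintype m] [Fintype p]
    (A : Matrix m q ℂ) (B : Matrix p r ℂ) : (A ⊗ₖ B)ᴴ = Aᴴ ⊗ₖ Bᴴ := by
  ext ⟨i,k⟩ ⟨j,l⟩
  simp [conjTranspose_apply, kroneckerMap_apply, mul_comm]

lemma EN.kron_posSemidef {m p : Type*} [Fintype m] [Fintype p] [DecidableEq m] [DecidableEq p]
    {A : Matrix m m ℂ} {B : Matrix p p ℂ}
    (hA : A.PosSemidef) (hB : B.PosSemidef) : (A ⊗ₖ B).PosSemidef := by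
  exact hA.kronecker hB

lemma EN.one_sub_posSemidef {n : Type*} [Fintype n] [DecidableEq n] {ρ : Matrix n n ℂ}
    (h : ρ.PosSemidef) (ht : ρ.trace = 1) : (1 - ρ).PosSemidef := by
  have hH := h.1
  set U : Matrix n n ℂ := (hH.eigenvectorUnitary : Matrix n n ℂ) with hU
  have hspec := hH.spectral_theorem
  simp only [Unitary.conjStarAlgAut_apply, Unitary.coe_star] at hspec
  have hUU : U * star U = 1 := (Matrix.mem_unitaryGroup_iff).mp hH.eigenvectorUnitary.2
  have hUU' : star U * U = 1 := (Matrix.mem_unitaryGroup_iff').mp hH.eigenvectorUnitary.2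
  have htr : (∑ i, (hH.eigenvalues i : ℂ)) = 1 := by
    have := congrArg Matrix.trace hspec
    rw [ht, Matrix.trace_mul_cycle, hUU', Matrix.one_mul, Matrix.trace_diagonal] at this
    simpa [Function.comp] using this.symm
  have hsum : (∑ i, hH.eigenvalues i) = 1 := by
    have h2 : ((∑ i, hH.eigenvalues i : ℝ) : ℂ) = 1 := by push_cast; exact htr
    exact_mod_cast h2
  have hle : ∀ i, hH.eigenvalues i ≤ 1 := by
    intro i
    rw [← hsum]
    exact Finset.single_le_sum (fun j _ => h.eigenvalues_nonneg j) (Finset.mem_univ i)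
  have h1 : (1 : Matrix n n ℂ) = U * 1 * star U := by rw [Matrix.mul_one, hUU]
  have hkey : 1 - ρ = U * (Matrix.diagonal fun i => ((1 - hH.eigenvalues i : ℝ) : ℂ)) * star U := by
    conv_lhs => rw [h1, hspec]
    rw [← Matrix.sub_mul, ← Matrix.mul_sub]
    congr 1
    rw [← Matrix.diagonal_one, Matrix.diagonal_sub]
    congr 1
    ext i
    simp
  rw [hkey]
  have hd : (Matrix.diagonal fun i => ((1 - hH.eigenvalues i : ℝ) : ℂ)).PosSemidef := by
    apply Matrix.PosSemidef.diagonal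
    intro i
    show (0:ℂ) ≤ ((1 - hH.eigenvalues i : ℝ) : ℂ)
    rw [Complex.zero_le_real]
    linarith [hle i]
  simpa [Matrix.star_eq_conjTranspose] using hd.mul_mul_conjTranspose_same U

lemma EN.smul_posSemidef {n : Type*} [Fintype n] {c : ℝ} (hc : 0 ≤ c)
    {M : Matrix n n ℂ} (hM : M.PosSemidef) : ((c : ℂ) • M).PosSemidef := by
  rw [Matrix.posSemidef_iff_dotProduct_mulVec]
  constructor
  · unfold Matrix.IsHermitian
    rw [Matrix.conjTranspose_smul, hM.1.eq]
    congr 1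
    simp
  · intro x
    rw [Matrix.smul_mulVec, dotProduct_smul, smul_eq_mul]
    exact mul_nonneg (by rw [Complex.zero_le_real]; exact hc) ((Matrix.posSemidef_iff_dotProduct_mulVec.mp hM).2 x)

lemma EN.choi_apply {α β : Type} [Fintype α] [DecidableEq α] [Fintype β]
    (N : Matrix α α ℂ → Matrix β β ℂ) (i j : α) (k l : β) :
    choiMatrix N (i, k) (j, l) = N (Matrix.single i j 1) k l := by
  unfold choiMatrix
  rw [Matrix.sum_apply, Finset.sum_eq_single i]
  · rw [Matrix.sum_apply, Finset.sum_eq_single j]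
    · simp [Matrix.kroneckerMap_apply]
    · intro b _ hb
      simp only [Matrix.kroneckerMap_apply]
      simp [Matrix.single_apply, hb]
    · simp
  · intro b _ hb
    rw [Matrix.sum_apply]
    apply Finset.sum_eq_zero
    intro c _
    simp only [Matrix.kroneckerMap_apply]
    simp [Matrix.single_apply, hb]
  · simp

lemma EN.isChannel_id (m : ℕ) :
    IsChannel (id : Matrix (Fin m) (Fin m) ℂ → Matrix (Fin m) (Fin m) ℂ) := by
  refine ⟨⟨fun _ _ => rfl, fun _ _ => rfl⟩, fun _ => rfl, ?_⟩
  have h : choiMatrix (id : Matrix (Fin m) (Fin m) ℂ → Matrix (Fin m) (Fin m) ℂ)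
      = (Matrix.of (fun (_ : Fin 1) (q : Fin m × Fin m) => if q.1 = q.2 then (1:ℂ) else 0))ᴴ *
        (Matrix.of (fun (_ : Fin 1) (q : Fin m × Fin m) => if q.1 = q.2 then (1:ℂ) else 0)) := by
    ext ⟨i, k⟩ ⟨j, l⟩
    rw [EN.choi_apply]
    simp [Matrix.mul_apply, Matrix.conjTranspose_apply, Matrix.single, ite_and]
    aesop
  rw [h]
  exact Matrix.posSemidef_conjTranspose_mul_self _

lemma EN.trace_mul_stdBasis {m : Type} [Fintype m] [DecidableEq m]
    (A : Matrix m m ℂ) (i j : m) :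
    (A * Matrix.single i j 1).trace = A j i := by
  rw [Matrix.trace]
  simp [Matrix.diag, Matrix.mul_apply, Matrix.single, ite_and]

-- the pure state at a basis vector
lemma EN.isState_stdBasis {n : ℕ} (z : Fin n) :
    IsState (Matrix.single z z (1:ℂ)) := by
  constructor
  · set A : Matrix (Fin 1) (Fin n) ℂ := Matrix.of fun _ j => if j = z then 1 else 0 with hA
    have h : Matrix.single z z (1:ℂ) = Aᴴ * A := by
      ext i j
      simp [hA, Matrix.mul_apply, Matrix.conjTranspose_apply, Matrix.single, ite_and]
      aesop
    rw [h]
    exact Matrix.posSemidef_conjTranspose_mul_self _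
  · simp [Matrix.trace, Matrix.diag, Matrix.single, ite_and]

lemma EN.isState_one1 : IsState (1 : Matrix (Fin 1) (Fin 1) ℂ) :=
  ⟨Matrix.PosSemidef.one, by simp⟩

-- H 1 1 = 0
lemma EN.H_one_eq_zero (E : Entropy) : E.H 1 (1 : Matrix (Fin 1) (Fin 1) ℂ) = 0 := by
  have h := E.additive 1 1 1 1 EN.isState_one1 EN.isState_one1
  have hm : mreindex ((1 : Matrix (Fin 1) (Fin 1) ℂ) ⊗ₖ (1 : Matrix (Fin 1) (Fin 1) ℂ))
      = (1 : Matrix (Fin (1*1)) (Fin (1*1)) ℂ) := by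
    rw [Matrix.one_kronecker_one]
    unfold mreindex
    simp
  rw [hm] at h
  have h' : E.H 1 (1 : Matrix (Fin 1) (Fin 1) ℂ)
      = E.H 1 (1 : Matrix (Fin 1) (Fin 1) ℂ) + E.H 1 (1 : Matrix (Fin 1) (Fin 1) ℂ) := h
  linarith

-- Maj from the 1-dimensional state to the pure state e_z e_z†
lemma EN.maj_one_pure {n : ℕ} (z : Fin n) :
    Maj (1 : Matrix (Fin 1) (Fin 1) ℂ) (Matrix.single z z (1:ℂ)) := by
  left
  refine ⟨Nat.one_le_iff_ne_zero.mpr (by rintro rfl; exact absurd z.2 (by simp)), 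
    Matrix.of fun i _ => if i = z then 1 else 0, id, ?_, EN.isChannel_id 1, rfl, ?_⟩
  · ext u v
    have hu : u = 0 := Subsingleton.elim _ _
    have hv : v = 0 := Subsingleton.elim _ _
    subst hu; subst hv
    simp [Matrix.mul_apply, Matrix.conjTranspose_apply, Matrix.one_apply, apply_ite]
  · ext i j
    simp [Matrix.mul_apply, Matrix.conjTranspose_apply, Matrix.single, ite_and,
      Fin.sum_univ_one, apply_ite]
    aesop

-- The measure-and-prepare unital channel sending the pure state e_z e_z† to ρ
lemma EN.maj_pure_state {n : ℕ} (hn : 2 ≤ n) {ρ : Matrix (Fin n) (Fin n) ℂ}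
    (hρ : IsState ρ) (z : Fin n) :
    Maj (Matrix.single z z (1:ℂ)) ρ := by
  set P : Matrix (Fin n) (Fin n) ℂ := Matrix.single z z (1:ℂ) with hP
  set Q : Matrix (Fin n) (Fin n) ℂ := 1 - P with hQ
  set τ : Matrix (Fin n) (Fin n) ℂ := ((n:ℂ) - 1)⁻¹ • (1 - ρ) with hτ
  set N : Matrix (Fin n) (Fin n) ℂ → Matrix (Fin n) (Fin n) ℂ :=
    fun X => (P * X).trace • ρ + (Q * X).trace • τ with hN
  have hcn : ((n:ℂ) - 1) ≠ 0 := by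
    rw [sub_ne_zero]
    intro h
    have : n = 1 := by exact_mod_cast h
    omega
  have hPs := EN.isState_stdBasis z
  have htrP : P.trace = 1 := hPs.2
  have htrQ : Q.trace = (n:ℂ) - 1 := by
    rw [hQ, Matrix.trace_sub, Matrix.trace_one, htrP]
    simp
  have htrτ : τ.trace = 1 := by
    rw [hτ, Matrix.trace_smul, Matrix.trace_sub, Matrix.trace_one, hρ.2]
    simp only [smul_eq_mul]
    rw [Fintype.card_fin]
    field_simp
  have hPP : P * P = P := by
    rw [hP, Matrix.single_mul_single_same, mul_one]
  have hNP : N P = ρ := by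
    rw [hN]
    simp only
    rw [hPP, htrP, hQ, Matrix.sub_mul, Matrix.one_mul, hPP, sub_self, Matrix.trace_zero,
      one_smul, zero_smul, add_zero]
  have hchan : IsChannel N := by
    refine ⟨⟨?_, ?_⟩, ?_, ?_⟩
    · intro X Y
      simp only [hN, Matrix.mul_add, Matrix.trace_add, add_smul]
      abel
    · intro c X
      simp only [hN, Matrix.mul_smul, Matrix.trace_smul, smul_eq_mul, smul_add, smul_smul]
    · intro X
      simp only [hN, Matrix.trace_add, Matrix.trace_smul, smul_eq_mul, htrτ, hρ.2, mul_one]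
      rw [← Matrix.trace_add, ← Matrix.add_mul, hQ]
      simp
    · have hch : choiMatrix N = Pᵀ ⊗ₖ ρ + Qᵀ ⊗ₖ τ := by
        ext ⟨i, k⟩ ⟨j, l⟩
        rw [EN.choi_apply]
        simp only [hN, Matrix.add_apply, Matrix.smul_apply, Matrix.kroneckerMap_apply,
          Matrix.transpose_apply, EN.trace_mul_stdBasis, smul_eq_mul]
      rw [hch]
      have hQpsd : Q.PosSemidef := EN.one_sub_posSemidef hPs.1 hPs.2
      have hτpsd : τ.PosSemidef := by
        have h1ρ : (1 - ρ).PosSemidef := EN.one_sub_posSemidef hρ.1 hρ.2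
        have hc : ((n:ℂ) - 1)⁻¹ = (((n:ℝ) - 1)⁻¹ : ℝ) := by push_cast; ring
        rw [hτ, hc]
        have hle : (0:ℝ) ≤ ((n:ℝ) - 1)⁻¹ := by
          have h1n : (1:ℝ) ≤ (n:ℝ) := by exact_mod_cast Nat.one_le_of_lt hn
          exact inv_nonneg.mpr (by linarith)
        exact EN.smul_posSemidef hle h1ρ
      exact (EN.kron_posSemidef hPs.1.transpose hρ.1).add
        (EN.kron_posSemidef hQpsd.transpose hτpsd)
  have hN1 : N 1 = 1 := by
    rw [hN]
    simp only [Matrix.mul_one, htrP, htrQ, one_smul, hτ, smul_smul]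
    rw [mul_inv_cancel₀ hcn, one_smul]
    abel
  left
  exact ⟨le_refl n, 1, N, by simp, hchan, hN1, by simp [hNP]⟩


/-- Every entropy is non-negative on every state. -/
theorem entropy_nonneg (E : Entropy) (n : ℕ) (ρ : Matrix (Fin n) (Fin n) ℂ)
    (hρ : IsState ρ) :
    0 ≤ E.H n ρ := by
  match n, ρ, hρ with
  | 0, ρ, hρ =>
    exfalso
    have := hρ.2
    simp [Matrix.trace] at this
  | 1, ρ, hρ =>
    have hρ1 : ρ = 1 := by
      ext i j
      have hi : i = 0 := Subsingleton.elim _ _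
      have hj : j = 0 := Subsingleton.elim _ _
      subst hi; subst hj
      have := hρ.2
      simp [Matrix.trace, Matrix.diag, Fin.sum_univ_one] at this
      simp [this, Matrix.one_apply]
    rw [hρ1, ← EN.H_one_eq_zero E]
  | (m+2), ρ, hρ =>
    set z : Fin (m+2) := ⟨0, by omega⟩
    have h1 : E.H 1 1 ≤ E.H (m+2) (Matrix.single z z (1:ℂ)) :=
      E.mono 1 (m+2) _ _ EN.isState_one1 (EN.isState_stdBasis z) (EN.maj_one_pure z)
    have h2 : E.H (m+2) (Matrix.single z z (1:ℂ)) ≤ E.H (m+2) ρ :=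
      E.mono (m+2) (m+2) _ _ (EN.isState_stdBasis z) hρ
        (EN.maj_pure_state (by omega) hρ z)
    have h0 := EN.H_one_eq_zero E
    linarith
end
end

section
/- Let 𝐇 be an entropy. Then 𝐇(u^{(2)}) > 0, where u^{(2)} := I_2/2 is the uniform state of dimension 2. -/
open Matrix Kronecker BigOperators
open scoped ENNReal ComplexOrder

noncomputable section

namespace EntropyAux

open Matrix
open scoped ComplexOrder

lemma kron_conjT {α β : Type} [Fintype α] [Fintype β]
    (A : Matrix α α ℂ) (B : Matrix β β ℂ) : (A ⊗ₖ B)ᴴ = Aᴴ ⊗ₖ Bᴴ := by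
  ext ⟨i, j⟩ ⟨k, l⟩
  simp [Matrix.conjTranspose_apply, Matrix.kroneckerMap_apply, star_mul']

lemma psd_kron {α β : Type} [Fintype α] [Fintype β] [DecidableEq α] [DecidableEq β]
    {A : Matrix α α ℂ} {B : Matrix β β ℂ}
    (hA : A.PosSemidef) (hB : B.PosSemidef) : (A ⊗ₖ B).PosSemidef := by
  exact hA.kronecker hB

lemma psd_smul {α : Type} [Fintype α] {A : Matrix α α ℂ} {c : ℂ}
    (hc : 0 ≤ c) (hA : A.PosSemidef) : (c • A).PosSemidef := by
  rw [Matrix.posSemidef_iff_dotProduct_mulVec]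
  constructor
  · unfold Matrix.IsHermitian
    rw [Matrix.conjTranspose_smul, hA.1, (IsSelfAdjoint.of_nonneg hc).star_eq]
  · intro x
    rw [Matrix.smul_mulVec, dotProduct_smul, smul_eq_mul]
    exact mul_nonneg hc ((Matrix.posSemidef_iff_dotProduct_mulVec.mp hA).2 x)

lemma natInv_nonneg (n : ℕ) : (0 : ℂ) ≤ (n : ℂ)⁻¹ := by
  rw [show ((n : ℂ))⁻¹ = (((n : ℝ)⁻¹ : ℝ) : ℂ) by push_cast; ring]
  exact Complex.zero_le_real.mpr (by positivity)

lemma unif_one : unif 1 = 1 := by simp [unif]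

lemma trace_unif {n : ℕ} (h : 1 ≤ n) : (unif n).trace = 1 := by
  have hn : ((n : ℂ)) ≠ 0 := Nat.cast_ne_zero.mpr (by omega)
  simp [unif, Matrix.trace_smul, Matrix.trace_one, smul_eq_mul,
    inv_mul_cancel₀ hn]

lemma unif_isState {n : ℕ} (h : 1 ≤ n) : IsState (unif n) :=
  ⟨psd_smul (natInv_nonneg n) Matrix.PosSemidef.one, trace_unif h⟩

lemma isChannel_id {α : Type} [Fintype α] [DecidableEq α] :
    IsChannel (id : Matrix α α ℂ → Matrix α α ℂ) := by
  refine ⟨⟨fun _ _ => rfl, fun _ _ => rfl⟩, fun _ => rfl, ?_⟩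
  have h : choiMatrix (id : Matrix α α ℂ → Matrix α α ℂ) =
      (Matrix.of fun (_ : Fin 1) (p : α × α) => if p.1 = p.2 then (1 : ℂ) else 0)ᴴ *
        (Matrix.of fun (_ : Fin 1) (p : α × α) => if p.1 = p.2 then (1 : ℂ) else 0) := by
    ext ⟨i, j⟩ ⟨k, l⟩
    simp only [choiMatrix, Matrix.sum_apply, Matrix.kroneckerMap_apply, id_eq,
      Matrix.single, Matrix.of_apply, Matrix.mul_apply, Matrix.conjTranspose_apply,
      ite_and, mul_ite, mul_one, mul_zero, ite_mul, one_mul, zero_mul,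
      Finset.sum_ite_eq, Finset.sum_ite_eq', Finset.mem_univ, if_true, Fin.sum_univ_one,
      star_one, star_zero]
    by_cases hij : i = j <;> by_cases hkl : k = l <;> simp [hij, hkl, eq_comm]
  rw [h]
  exact Matrix.posSemidef_conjTranspose_mul_self _

/-- The completely depolarizing channel. -/
lemma choi_depol {n : ℕ} :
    choiMatrix (fun X : Matrix (Fin n) (Fin n) ℂ => X.trace • unif n) =
      (n : ℂ)⁻¹ • (1 : Matrix (Fin n × Fin n) (Fin n × Fin n) ℂ) := by
  ext ⟨i, k⟩ ⟨j, l⟩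
  simp only [choiMatrix, Matrix.sum_apply, Matrix.kroneckerMap_apply,
    Matrix.single, Matrix.of_apply, Matrix.trace, Matrix.diag, unif,
    Matrix.smul_apply, Matrix.one_apply, ite_and, mul_ite, mul_one, mul_zero, ite_mul,
    one_mul, zero_mul, smul_eq_mul, Finset.sum_ite_eq, Finset.sum_ite_eq',
    Finset.mem_univ, if_true, Prod.mk.injEq]
  by_cases hij : i = j <;> by_cases hkl : k = l <;> simp [hij, hkl, eq_comm]

lemma isChannel_depol {n : ℕ} (h : 1 ≤ n) :
    IsChannel (fun X : Matrix (Fin n) (Fin n) ℂ => X.trace • unif n) := by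
  refine ⟨⟨fun X Y => by rw [Matrix.trace_add, add_smul],
      fun c X => by rw [Matrix.trace_smul, smul_assoc]⟩, ?_, ?_⟩
  · intro X
    rw [Matrix.trace_smul, trace_unif h, smul_eq_mul, mul_one]
  · rw [choi_depol]
    exact psd_smul (natInv_nonneg n) Matrix.PosSemidef.one

lemma depol_one {n : ℕ} (h : 1 ≤ n) :
    (fun X : Matrix (Fin n) (Fin n) ℂ => X.trace • unif n) 1 = 1 := by
  have hn : ((n : ℂ)) ≠ 0 := Nat.cast_ne_zero.mpr (by omega)
  simp [Matrix.trace_one, unif, smul_smul, mul_inv_cancel₀ hn]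

lemma maj_unif {n : ℕ} (h : 1 ≤ n) {ρ : Matrix (Fin n) (Fin n) ℂ} (hρ : IsState ρ) :
    Maj ρ (unif n) := by
  left
  refine ⟨le_refl n, 1, fun X => X.trace • unif n, by simp, isChannel_depol h,
    depol_one h, ?_⟩
  simp [hρ.2]

/-- Pure state `|0⟩⟨0|`. -/
def pureS (n : ℕ) [NeZero n] : Matrix (Fin n) (Fin n) ℂ := Matrix.single 0 0 1

def colV (n : ℕ) [NeZero n] : Matrix (Fin n) (Fin 1) ℂ :=
  Matrix.of fun i _ => if i = 0 then 1 else 0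

lemma colV_iso (n : ℕ) [NeZero n] : (colV n)ᴴ * colV n = 1 := by
  ext j j'
  simp [colV, Matrix.mul_apply, Matrix.conjTranspose_apply, Matrix.one_apply,
    Finset.sum_ite_eq, Subsingleton.elim j j']

lemma colV_mul (n : ℕ) [NeZero n] : colV n * (colV n)ᴴ = pureS n := by
  ext i j
  simp only [colV, pureS, Matrix.mul_apply, Matrix.conjTranspose_apply,
    Matrix.single, Matrix.of_apply, ite_and, Fin.sum_univ_one, star_one, star_zero,
    mul_ite, mul_one, mul_zero, ite_mul, one_mul, zero_mul, apply_ite (star : ℂ → ℂ)]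
  by_cases hi : i = 0 <;> by_cases hj : j = 0 <;> simp [hi, hj, eq_comm]

lemma pureS_isState (n : ℕ) [NeZero n] : IsState (pureS n) := by
  constructor
  · rw [← colV_mul]
    exact Matrix.posSemidef_self_mul_conjTranspose _
  · simp [pureS, Matrix.trace, Matrix.diag, Matrix.single, ite_and,
      Finset.sum_ite_eq]

lemma maj_pureS_unif_one (n : ℕ) [NeZero n] : Maj (pureS n) (unif 1) := by
  right
  refine ⟨Nat.one_le_iff_ne_zero.mpr (NeZero.ne n), colV n, id, colV_iso n,
    isChannel_id, rfl, ?_⟩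
  rw [unif_one, Matrix.mul_one, colV_mul]
  rfl

lemma maj_unif_one_pureS (n : ℕ) [NeZero n] : Maj (unif 1) (pureS n) := by
  left
  refine ⟨Nat.one_le_iff_ne_zero.mpr (NeZero.ne n), colV n, id, colV_iso n,
    isChannel_id, rfl, ?_⟩
  show pureS n = colV n * (unif 1) * (colV n)ᴴ
  rw [unif_one, Matrix.mul_one, colV_mul]

lemma unif_kron (a b : ℕ) : mreindex (unif a ⊗ₖ unif b) = unif (a * b) := by
  have h : (unif a) ⊗ₖ (unif b) =
      ((a * b : ℕ) : ℂ)⁻¹ • (1 : Matrix (Fin a × Fin b) (Fin a × Fin b) ℂ) := by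
    rw [unif, unif, Matrix.smul_kronecker, Matrix.kronecker_smul,
      Matrix.one_kronecker_one, smul_smul, ← mul_inv, ← Nat.cast_mul]
  rw [h, mreindex, unif]
  simp [Matrix.reindex_apply, Matrix.submatrix_smul, Matrix.submatrix_one_equiv]

lemma H_unif_one (E : Entropy) : E.H 1 (unif 1) = 0 := by
  have h := E.additive 1 1 (unif 1) (unif 1) (unif_isState le_rfl) (unif_isState le_rfl)
  rw [unif_kron] at h
  have h' : E.H 1 (unif 1) = E.H 1 (unif 1) + E.H 1 (unif 1) := h
  linarith

lemma H_pureS (E : Entropy) (n : ℕ) [NeZero n] : E.H n (pureS n) = 0 := by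
  have h1 := E.mono n 1 (pureS n) (unif 1) (pureS_isState n) (unif_isState le_rfl)
    (maj_pureS_unif_one n)
  have h2 := E.mono 1 n (unif 1) (pureS n) (unif_isState le_rfl) (pureS_isState n)
    (maj_unif_one_pureS n)
  have := H_unif_one E
  linarith

lemma H_unif_pow (E : Entropy) : ∀ k : ℕ, E.H (2 ^ k) (unif (2 ^ k)) = k * E.H 2 (unif 2)
  | 0 => by
    rw [Nat.cast_zero, zero_mul]
    exact H_unif_one E
  | (k + 1) => by
    have h := E.additive (2 ^ k) 2 (unif (2 ^ k)) (unif 2)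
      (unif_isState (Nat.one_le_two_pow)) (unif_isState (by norm_num))
    rw [unif_kron] at h
    have h2 : E.H (2 ^ (k + 1)) (unif (2 ^ (k + 1))) =
        E.H (2 ^ k) (unif (2 ^ k)) + E.H 2 (unif 2) := by
      rw [pow_succ]; exact h
    rw [h2, H_unif_pow E k]
    push_cast; ring

def vemb {n d : ℕ} (h : n ≤ d) : Matrix (Fin d) (Fin n) ℂ :=
  Matrix.of fun i j => if i = Fin.castLE h j then 1 else 0

lemma vemb_iso {n d : ℕ} (h : n ≤ d) : (vemb h)ᴴ * vemb h = 1 := by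
  ext j j'
  simp only [vemb, Matrix.mul_apply, Matrix.conjTranspose_apply, Matrix.one_apply,
    Matrix.of_apply, apply_ite (star : ℂ → ℂ), star_one, star_zero,
    mul_ite, mul_one, mul_zero, ite_mul, one_mul, zero_mul,
    Finset.sum_ite_eq, Finset.sum_ite_eq', Finset.mem_univ, if_true, Fin.castLE_inj]
  by_cases hjj : j = j' <;> simp [hjj, eq_comm]

lemma emb_isState {n d : ℕ} (hn : 1 ≤ n) (h : n ≤ d) :
    IsState (vemb h * unif n * (vemb h)ᴴ) := by
  refine ⟨(unif_isState hn).1.mul_mul_conjTranspose_same _, ?_⟩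
  rw [Matrix.trace_mul_cycle, vemb_iso h, one_mul, trace_unif hn]

lemma H_unif_mono (E : Entropy) {n d : ℕ} (hn : 1 ≤ n) (h : n ≤ d) :
    E.H n (unif n) ≤ E.H d (unif d) := by
  have hd : 1 ≤ d := le_trans hn h
  have h1 : Maj (unif n) (vemb h * unif n * (vemb h)ᴴ) := by
    left
    exact ⟨h, vemb h, id, vemb_iso h, isChannel_id, rfl, rfl⟩
  have h2 := E.mono n d (unif n) _ (unif_isState hn) (emb_isState hn h) h1
  have h3 := E.mono d d _ (unif d) (emb_isState hn h) (unif_isState hd)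
    (maj_unif hd (emb_isState hn h))
  linarith

section MP

variable {m : ℕ}

/-- The measure-and-prepare unital channel sending `|0⟩⟨0|` to `ρ`. -/
def mp (n : ℕ) [NeZero n] (ρ : Matrix (Fin n) (Fin n) ℂ) :
    Matrix (Fin n) (Fin n) ℂ → Matrix (Fin n) (Fin n) ℂ :=
  fun X => X 0 0 • ρ + (X.trace - X 0 0) • (((n : ℂ) - 1)⁻¹ • (1 - ρ))

lemma cast_sub_one_ne (h2 : 2 ≤ m) : ((m : ℂ) - 1) ≠ 0 := by
  have : ((m : ℂ) - 1) = (((m : ℝ) - 1 : ℝ) : ℂ) := by push_cast; ring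
  rw [this]
  have : (1 : ℝ) ≤ (m : ℝ) - 1 := by
    have : (2 : ℝ) ≤ (m : ℝ) := by exact_mod_cast h2
    linarith
  exact_mod_cast (by positivity : (((m : ℝ) - 1 : ℝ) : ℂ) ≠ 0)

lemma one_sub_psd {n : ℕ} {ρ : Matrix (Fin n) (Fin n) ℂ} (h : IsState ρ) :
    (1 - ρ).PosSemidef := by
  obtain ⟨hpsd, htr⟩ := h
  have hherm := hpsd.1
  set U : Matrix (Fin n) (Fin n) ℂ := (hherm.eigenvectorUnitary : Matrix (Fin n) (Fin n) ℂ) with hUdef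
  have hU : U * star U = 1 := Matrix.mem_unitaryGroup_iff.mp hherm.eigenvectorUnitary.2
  have hU' : star U * U = 1 := Matrix.mem_unitaryGroup_iff'.mp hherm.eigenvectorUnitary.2
  have hspec : ρ = U * Matrix.diagonal (RCLike.ofReal ∘ hherm.eigenvalues) * star U :=
    hherm.spectral_theorem
  have hsum : ∑ i, hherm.eigenvalues i = 1 := by
    have h1 : ρ.trace = ∑ i, ((hherm.eigenvalues i : ℝ) : ℂ) := by
      conv_lhs => rw [hspec]
      rw [Matrix.trace_mul_cycle, hU', one_mul, Matrix.trace_diagonal]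
      rfl
    rw [htr] at h1
    have h2 := h1.symm
    rw [← Complex.ofReal_sum] at h2
    exact_mod_cast h2
  have heig : ∀ i, hherm.eigenvalues i ≤ 1 := by
    intro i
    calc hherm.eigenvalues i ≤ ∑ j, hherm.eigenvalues j :=
      Finset.single_le_sum (fun j _ => hpsd.eigenvalues_nonneg j) (Finset.mem_univ i)
    _ = 1 := hsum
  have key : 1 - ρ = U * Matrix.diagonal
      (fun i => ((1 - hherm.eigenvalues i : ℝ) : ℂ)) * star U := by
    have hdiag : Matrix.diagonal (fun i => ((1 - hherm.eigenvalues i : ℝ) : ℂ)) =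
        1 - Matrix.diagonal (RCLike.ofReal ∘ hherm.eigenvalues) := by
      ext a b
      rcases eq_or_ne a b with hab | hab <;>
        simp [Matrix.diagonal, Matrix.one_apply, hab, Complex.ofReal_sub, RCLike.ofReal_alg]
    rw [hdiag, Matrix.mul_sub, Matrix.sub_mul, mul_one, hU, ← hspec]
  have hd : (Matrix.diagonal (fun i => ((1 - hherm.eigenvalues i : ℝ) : ℂ))).PosSemidef := by
    apply Matrix.PosSemidef.diagonal
    intro i
    exact Complex.zero_le_real.mpr (by linarith [heig i])
  have hres := hd.mul_mul_conjTranspose_same U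
  rw [key, Matrix.star_eq_conjTranspose]
  exact hres

lemma one_sub_pureS_psd (n : ℕ) [NeZero n] : (1 - pureS n).PosSemidef := by
  have h : (1 : Matrix (Fin n) (Fin n) ℂ) - pureS n =
      Matrix.diagonal (fun i => if i = 0 then 0 else 1) := by
    ext i j
    rcases eq_or_ne i j with hij | hij <;> rcases eq_or_ne i 0 with h0 | h0 <;>
      rcases eq_or_ne j 0 with h1 | h1 <;>
      simp_all [pureS, Matrix.single, Matrix.one_apply, Matrix.diagonal, ite_and,
        eq_comm]
  rw [h]
  apply Matrix.PosSemidef.diagonal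
  intro i
  dsimp only
  split
  · exact le_refl 0
  · exact zero_le_one

lemma choi_mp {n : ℕ} [NeZero n] (ρ : Matrix (Fin n) (Fin n) ℂ) :
    choiMatrix (mp n ρ) =
      pureS n ⊗ₖ ρ + (1 - pureS n) ⊗ₖ (((n : ℂ) - 1)⁻¹ • (1 - ρ)) := by
  ext ⟨i, k⟩ ⟨j, l⟩
  simp only [choiMatrix, mp, Matrix.sum_apply, Matrix.kroneckerMap_apply,
    Matrix.add_apply, Matrix.smul_apply, Matrix.single, Matrix.of_apply,
    Matrix.trace, Matrix.diag, pureS, Matrix.sub_apply, Matrix.one_apply, smul_eq_mul,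
    ite_and, mul_ite, mul_one, mul_zero, ite_mul, one_mul, zero_mul,
    Finset.sum_ite_eq, Finset.sum_ite_eq', Finset.mem_univ, if_true]
  by_cases hij : i = j <;> by_cases hi : i = 0 <;> by_cases hj : j = 0 <;>
    by_cases hkl : k = l <;> simp_all [eq_comm] <;> ring

lemma mp_isChannel {n : ℕ} [NeZero n] (h2 : 2 ≤ n) {ρ : Matrix (Fin n) (Fin n) ℂ}
    (hρ : IsState ρ) : IsChannel (mp n ρ) := by
  have hc : ((n : ℂ) - 1) ≠ 0 := cast_sub_one_ne h2
  refine ⟨⟨?_, ?_⟩, ?_, ?_⟩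
  · intro X Y
    simp only [mp, Matrix.add_apply, Matrix.trace_add]
    module
  · intro c X
    simp only [mp, Matrix.smul_apply, Matrix.trace_smul, smul_eq_mul]
    module
  · intro X
    simp only [mp, Matrix.trace_add, Matrix.trace_smul, Matrix.trace_sub,
      Matrix.trace_one, hρ.2, smul_eq_mul, Fintype.card_fin]
    field_simp
    ring
  · rw [choi_mp]
    refine Matrix.PosSemidef.add (psd_kron (pureS_isState n).1 hρ.1) (psd_kron
      (one_sub_pureS_psd n) (psd_smul ?_ (one_sub_psd hρ)))
    have h : ((n : ℂ) - 1)⁻¹ = ((((n : ℝ) - 1)⁻¹ : ℝ) : ℂ) := by push_cast; ring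
    rw [h]
    refine Complex.zero_le_real.mpr ?_
    have h3 : (2 : ℝ) ≤ (n : ℝ) := by exact_mod_cast h2
    have h4 : (0 : ℝ) < (n : ℝ) - 1 := by linarith
    positivity

lemma mp_one {n : ℕ} [NeZero n] (h2 : 2 ≤ n) (ρ : Matrix (Fin n) (Fin n) ℂ) :
    mp n ρ 1 = 1 := by
  have hc : ((n : ℂ) - 1) ≠ 0 := cast_sub_one_ne h2
  simp only [mp, Matrix.one_apply_eq, Matrix.trace_one, one_smul, smul_smul,
    Fintype.card_fin, mul_inv_cancel₀ hc, one_smul]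
  rw [add_sub_cancel]

lemma mp_pureS {n : ℕ} [NeZero n] (ρ : Matrix (Fin n) (Fin n) ℂ) :
    mp n ρ (pureS n) = ρ := by
  have h1 : pureS n 0 0 = 1 := by simp [pureS, Matrix.single]
  have h2 : (pureS n).trace = 1 := (pureS_isState n).2
  simp [mp, h1, h2]

lemma maj_pureS {n : ℕ} [NeZero n] (h2 : 2 ≤ n) {ρ : Matrix (Fin n) (Fin n) ℂ}
    (hρ : IsState ρ) : Maj (pureS n) ρ := by
  left
  refine ⟨le_refl n, 1, mp n ρ, by simp, mp_isChannel h2 hρ, mp_one h2 ρ, ?_⟩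
  rw [mp_pureS, Matrix.conjTranspose_one, mul_one, one_mul]

end MP

end EntropyAux

/-- Every entropy is strictly positive on the uniform state of dimension two. -/
theorem entropy_unif_two_pos (E : Entropy) :
    0 < E.H 2 (unif 2) := by
  classical
  open EntropyAux in
  obtain ⟨n, ρ, hρ, hne⟩ := E.nontrivial
  match n, ρ, hρ, hne with
  | 0, ρ, hρ, hne =>
    exact absurd hρ.2 (by simp [Matrix.trace])
  | 1, ρ, hρ, hne =>
    exfalso
    have hρ1 : ρ = unif 1 := by
      have htr := hρ.2
      simp [Matrix.trace, Matrix.diag, Fin.sum_univ_one] at htr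
      ext i j
      fin_cases i; fin_cases j
      simp [EntropyAux.unif_one, Matrix.one_apply, htr]
    rw [hρ1] at hne
    exact hne (EntropyAux.H_unif_one E)
  | (m + 2), ρ, hρ, hne =>
    have h2 : 2 ≤ m + 2 := by omega
    have h1 : 1 ≤ m + 2 := by omega
    have hlow : 0 ≤ E.H (m + 2) ρ := by
      have := E.mono (m + 2) (m + 2) (EntropyAux.pureS (m + 2)) ρ
        (EntropyAux.pureS_isState (m + 2)) hρ (EntropyAux.maj_pureS h2 hρ)
      rw [EntropyAux.H_pureS E (m + 2)] at this
      exact this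
    have hρpos : 0 < E.H (m + 2) ρ := lt_of_le_of_ne hlow (Ne.symm hne)
    have hup : E.H (m + 2) ρ ≤ E.H (m + 2) (unif (m + 2)) :=
      E.mono (m + 2) (m + 2) ρ (unif (m + 2)) hρ (EntropyAux.unif_isState h1)
        (EntropyAux.maj_unif h1 hρ)
    have hmono : E.H (m + 2) (unif (m + 2)) ≤ E.H (2 ^ (m + 2)) (unif (2 ^ (m + 2))) :=
      EntropyAux.H_unif_mono E h1 (Nat.le_of_lt Nat.lt_two_pow_self)
    have hpow := EntropyAux.H_unif_pow E (m + 2)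
    have hfin : 0 < ((m + 2 : ℕ) : ℝ) * E.H 2 (unif 2) := by
      rw [← hpow]
      exact lt_of_lt_of_le hρpos (le_trans hup hmono)
    by_contra hcon
    push_neg at hcon
    have : ((m + 2 : ℕ) : ℝ) * E.H 2 (unif 2) ≤ 0 := by
      apply mul_nonpos_of_nonneg_of_nonpos
      · positivity
      · exact hcon
    linarith
end
end

section
/- Let 𝐇 be an entropy satisfying the normalization 𝐇(u^{(2)}) = 1, where u^{(2)} := I_2/2. Then 𝐇(u^{(d)}) = log₂ d for every d ≥ 1, where u^{(d)} := I_d/d is the uniform state of dimension d. -/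
open Matrix Kronecker BigOperators
open scoped ENNReal ComplexOrder

noncomputable section

/-! ### Auxiliary lemmas for `entropy_unif_eq_logb` -/

section EntropyUnifAux

lemma smul_one_posSemidef {ι : Type} [Fintype ι] [DecidableEq ι] {c : ℂ} (hc : 0 ≤ c) :
    (c • (1 : Matrix ι ι ℂ)).PosSemidef := by
  rw [posSemidef_iff_dotProduct_mulVec]
  constructor
  · have hs : star c = c := by
      rw [Complex.star_def, Complex.conj_eq_iff_im]
      exact (Complex.nonneg_iff.mp hc).2.symm
    simp [Matrix.IsHermitian, conjTranspose_smul, hs]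
  · intro x
    simp only [smul_mulVec, one_mulVec, dotProduct_smul, smul_eq_mul]
    exact mul_nonneg hc (dotProduct_star_self_nonneg x)

lemma natCast_inv_nonneg (n : ℕ) : (0 : ℂ) ≤ ((n : ℂ))⁻¹ := by
  rw [show ((n:ℂ))⁻¹ = (((n:ℝ)⁻¹ : ℝ) : ℂ) by push_cast; ring, Complex.zero_le_real]
  positivity

lemma unif_posSemidef (n : ℕ) : (unif n).PosSemidef :=
  smul_one_posSemidef (natCast_inv_nonneg n)

lemma trace_unif {n : ℕ} (hn : n ≠ 0) : (unif n).trace = 1 := by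
  simp only [unif, Matrix.trace_smul, Matrix.trace_one, smul_eq_mul, Fintype.card_fin]
  exact inv_mul_cancel₀ (by exact_mod_cast hn)

lemma isState_unif {n : ℕ} (hn : 1 ≤ n) : IsState (unif n) :=
  ⟨unif_posSemidef n, trace_unif (by omega)⟩

/-- The completely depolarizing channel. -/
def depol (n : ℕ) : Matrix (Fin n) (Fin n) ℂ → Matrix (Fin n) (Fin n) ℂ :=
  fun X => X.trace • unif n

lemma choiMatrix_depol (n : ℕ) : choiMatrix (depol n) = (n : ℂ)⁻¹ • 1 := by
  ext ⟨i, k⟩ ⟨j, l⟩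
  simp [choiMatrix, depol, unif, Matrix.sum_apply, kroneckerMap_apply,
    Matrix.single, Matrix.trace, Matrix.diag, Matrix.one_apply, Finset.sum_ite_eq,
    ite_and, Matrix.smul_apply, Prod.ext_iff]
  rcases eq_or_ne i j with h | h
  · subst h; simp [Matrix.smul_apply, Matrix.one_apply]
  · simp [h, Ne.symm h]

lemma depol_isChannel {n : ℕ} (hn : 1 ≤ n) : IsChannel (depol n) := by
  refine ⟨⟨fun X Y => ?_, fun c X => ?_⟩, fun X => ?_, ?_⟩
  · simp [depol, Matrix.trace_add, add_smul]
  · simp [depol, Matrix.trace_smul, smul_smul]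
  · simp [depol, Matrix.trace_smul, trace_unif (show n ≠ 0 by omega)]
  · rw [choiMatrix_depol]
    exact smul_one_posSemidef (natCast_inv_nonneg n)

lemma depol_one {n : ℕ} (hn : 1 ≤ n) : depol n 1 = 1 := by
  simp only [depol, Matrix.trace_one, Fintype.card_fin, unif, smul_smul]
  rw [mul_inv_cancel₀ (show (n:ℂ) ≠ 0 by exact_mod_cast (by omega : n ≠ 0)), one_smul]

lemma depol_unif {n : ℕ} (hn : 1 ≤ n) : depol n (unif n) = unif n := by
  rw [depol, trace_unif (show n ≠ 0 by omega), one_smul]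

/-- The standard isometric embedding `ℂ^d → ℂ^{d'}`. -/
def embedV {d d' : ℕ} (h : d ≤ d') : Matrix (Fin d') (Fin d) ℂ :=
  Matrix.of fun i j => if i = Fin.castLE h j then 1 else 0

lemma embedV_isometry {d d' : ℕ} (h : d ≤ d') : (embedV h)ᴴ * (embedV h) = 1 := by
  ext j j'
  simp [embedV, Matrix.mul_apply, Matrix.conjTranspose_apply, Matrix.one_apply,
    apply_ite, Finset.sum_ite_eq, Fin.castLE_inj, eq_comm]

lemma mreindex_unif (d e : ℕ) : mreindex (unif d ⊗ₖ unif e) = unif (d * e) := by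
  have h1 : unif d ⊗ₖ unif e
      = ((d:ℂ)⁻¹ * (e:ℂ)⁻¹) • (1 : Matrix (Fin d × Fin e) (Fin d × Fin e) ℂ) := by
    rw [unif, unif, smul_kronecker, kronecker_smul, one_kronecker_one, smul_smul]
  rw [h1, mreindex, unif]
  simp [Matrix.reindex_apply, Matrix.submatrix_smul, Matrix.submatrix_one_equiv]
  ring_nf

lemma entropy_mono_unif (E : Entropy) {d d' : ℕ} (hd : 1 ≤ d) (h : d ≤ d') :
    E.H d (unif d) ≤ E.H d' (unif d') := by
  have hd' : 1 ≤ d' := hd.trans h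
  set σ₀ : Matrix (Fin d') (Fin d') ℂ := embedV h * unif d * (embedV h)ᴴ with hσ₀
  have hσtrace : σ₀.trace = 1 := by
    rw [hσ₀, Matrix.trace_mul_cycle, embedV_isometry h, Matrix.one_mul,
      trace_unif (show d ≠ 0 by omega)]
  have hσstate : IsState σ₀ :=
    ⟨(unif_posSemidef d).mul_mul_conjTranspose_same (embedV h), hσtrace⟩
  have stepA : E.H d (unif d) ≤ E.H d' σ₀ := by
    refine E.mono d d' _ _ (isState_unif hd) hσstate (Or.inl ⟨h, embedV h, depol d,
      embedV_isometry h, depol_isChannel hd, depol_one hd, ?_⟩)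
    rw [depol_unif hd]
  have stepB : E.H d' σ₀ ≤ E.H d' (unif d') := by
    refine E.mono d' d' _ _ hσstate (isState_unif hd') (Or.inl ⟨le_refl d', 1, depol d',
      by simp, depol_isChannel hd', depol_one hd', ?_⟩)
    rw [depol, hσtrace, one_smul, Matrix.conjTranspose_one, Matrix.one_mul, Matrix.mul_one]
  exact stepA.trans stepB

lemma entropy_unif_add (E : Entropy) {d e : ℕ} (hd : 1 ≤ d) (he : 1 ≤ e) :
    E.H (d * e) (unif (d * e)) = E.H d (unif d) + E.H e (unif e) := by
  have := E.additive d e (unif d) (unif e) (isState_unif hd) (isState_unif he)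
  rwa [mreindex_unif d e] at this

lemma entropy_unif_one (E : Entropy) : E.H 1 (unif 1) = 0 := by
  have h := entropy_unif_add E (le_refl 1) (le_refl 1)
  norm_num at h
  linarith

lemma entropy_unif_pow (E : Entropy) {d : ℕ} (hd : 1 ≤ d) (m : ℕ) :
    E.H (d ^ m) (unif (d ^ m)) = m * E.H d (unif d) := by
  induction m with
  | zero => simpa using entropy_unif_one E
  | succ m ih =>
      rw [pow_succ, entropy_unif_add E (Nat.one_le_pow m d (by omega)) hd, ih]
      push_cast; ring

end EntropyUnifAux

/-- Every normalized entropy takes the value `log₂ d` on the uniform state of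
dimension `d`. -/
theorem entropy_unif_eq_logb (E : Entropy) (hnorm : E.H 2 (unif 2) = 1)
    (d : ℕ) (hd : 1 ≤ d) :
    E.H d (unif d) = Real.logb 2 d := by
  set g : ℕ → ℝ := fun n => E.H n (unif n) with hg
  set L : ℝ := Real.logb 2 d with hL
  have hdpos : (0:ℝ) < d := by exact_mod_cast hd
  have hLnn : 0 ≤ L := Real.logb_nonneg (by norm_num) (by exact_mod_cast hd)
  have key : ∀ n : ℕ, 0 < n → |g d - L| ≤ 1 / n := by
    intro n hn
    have hn' : (0:ℝ) < n := by exact_mod_cast hn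
    set k : ℕ := Nat.floor ((n:ℝ) * L) with hk
    have hk1 : (k:ℝ) ≤ (n:ℝ) * L := Nat.floor_le (by positivity)
    have hk2 : (n:ℝ) * L < (k:ℝ) + 1 := Nat.lt_floor_add_one _
    have hdpow : ((d:ℝ)) ^ n = (2:ℝ) ^ ((n:ℝ) * L) := by
      rw [mul_comm, Real.rpow_mul (by norm_num),
        Real.rpow_logb two_pos (by norm_num) hdpos, Real.rpow_natCast]
    have hA : 2 ^ k ≤ d ^ n := by
      have h1 : (2:ℝ) ^ ((k:ℝ)) ≤ (2:ℝ) ^ ((n:ℝ) * L) :=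
        (Real.rpow_le_rpow_left_iff (by norm_num : (1:ℝ) < 2)).mpr hk1
      rw [Real.rpow_natCast, ← hdpow] at h1
      exact_mod_cast h1
    have hB : d ^ n ≤ 2 ^ (k + 1) := by
      have h1 : (2:ℝ) ^ ((n:ℝ) * L) ≤ (2:ℝ) ^ (((k:ℝ) + 1)) :=
        (Real.rpow_le_rpow_left_iff (by norm_num : (1:ℝ) < 2)).mpr hk2.le
      rw [show ((k:ℝ) + 1) = ((k + 1 : ℕ) : ℝ) by push_cast; ring,
        Real.rpow_natCast, ← hdpow] at h1
      exact_mod_cast h1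
    have hgm1 : g (2 ^ k) ≤ g (d ^ n) :=
      entropy_mono_unif E (Nat.one_le_two_pow) hA
    have hgm2 : g (d ^ n) ≤ g (2 ^ (k + 1)) :=
      entropy_mono_unif E (Nat.one_le_pow n d (by omega)) hB
    have e1 : g (2 ^ k) = k := by
      show E.H (2 ^ k) (unif (2 ^ k)) = (k : ℝ)
      rw [entropy_unif_pow E (d := 2) (by norm_num) k, hnorm, mul_one]
    have e2 : g (2 ^ (k + 1)) = k + 1 := by
      show E.H (2 ^ (k + 1)) (unif (2 ^ (k + 1))) = (k : ℝ) + 1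
      rw [entropy_unif_pow E (d := 2) (by norm_num) (k + 1), hnorm, mul_one]; push_cast; ring
    have e3 : g (d ^ n) = n * g d := entropy_unif_pow E hd n
    rw [e1] at hgm1
    rw [e2, e3] at hgm2
    rw [e3] at hgm1
    have h1 : (g d - L) * n ≤ 1 := by nlinarith
    have h2 : (L - g d) * n ≤ 1 := by nlinarith
    rw [abs_sub_le_iff]
    exact ⟨(le_div_iff₀ hn').mpr h1, (le_div_iff₀ hn').mpr h2⟩
  by_contra hne
  have hpos : 0 < |g d - L| := abs_pos.mpr (sub_ne_zero.mpr hne)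
  obtain ⟨n, hn⟩ := exists_nat_gt (1 / |g d - L|)
  have hn0 : 0 < n := by
    by_contra h
    push_neg at h
    interval_cases n
    simp at hn
    nlinarith [one_div_pos.mpr hpos]
  have hn' : (0:ℝ) < n := by exact_mod_cast hn0
  have h1 : (1:ℝ) < n * |g d - L| := by
    rw [div_lt_iff₀ hpos] at hn; linarith
  have h2 : 1 / (n:ℝ) < |g d - L| := by
    rw [div_lt_iff₀ hn']; linarith
  linarith [key n hn0]
end
end
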